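/- Let A be an m×n real matrix with nonzero columns, γ ≥ 1, and k a natural number with k < (1/2)(1 + 1/μ(A)). If x, x' ∈ ℝ^{nγ} are both k-sparse and (A ⊗ ε_γ^T) x = (A ⊗ ε_γ^T) x', then their block-sum vectors agree: x^γ = x'^γ. -/
import Mathlib


noncomputable section
open Matrix ENNReal

/-- The matrix `A ⊗ ε_γᵀ` (each column of `A` repeated `γ` consecutive times,
scaled by `1/√γ`), with the column index set `Fin n × Fin γ` flattened to `Fin (n·γ)`. -/
def kronEpsT {m n : ℕ} (A : Matrix (Fin m) (Fin n) ℝ) (γ : ℕ) :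
    Matrix (Fin m) (Fin (n * γ)) ℝ :=
  Matrix.of fun i k =>
    A i ⟨(k : ℕ) / γ, by
      have hk := k.isLt
      rcases Nat.eq_zero_or_pos γ with h | h
      · subst h; exact absurd hk (by simp)
      · exact (Nat.div_lt_iff_lt_mul h).2 hk⟩ * (Real.sqrt (γ : ℝ))⁻¹

/-- The block-sum vector `x^γ ∈ ℝⁿ` of `x ∈ ℝ^{nγ}`:
`(x^γ)_j` is the sum of the `j`-th block of `γ` consecutive entries of `x`. -/
def blockSum {n γ : ℕ} (x : Fin (n * γ) → ℝ) : Fin n → ℝ :=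
  fun j => ∑ i : Fin γ, x (finProdFinEquiv (j, i))

/-- The block-average expansion `x̄ ∈ ℝ^{nγ}`: every entry in the `j`-th block of `γ`
consecutive entries is replaced by the block average `(x^γ)_j / γ`. -/
def blockAvg {n γ : ℕ} (x : Fin (n * γ) → ℝ) : Fin (n * γ) → ℝ :=
  fun k => blockSum x (finProdFinEquiv.symm k).1 / (γ : ℝ)

/-- The spark of `A`: the smallest number of columns of `A` that form a linearly
dependent set (`⊤` if all sets of columns are linearly independent).  Equivalently,
the minimal size of the support of a nonzero vector in the kernel of `A`. -/
def spark {m n : ℕ} (A : Matrix (Fin m) (Fin n) ℝ) : ℕ∞ :=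
  sInf {c : ℕ∞ | ∃ v : Fin n → ℝ, v ≠ 0 ∧ A.mulVec v = 0 ∧
    c = ((Function.support v).ncard : ℕ∞)}

/-- The mutual coherence `μ(A)`: the largest normalized absolute inner product
between two distinct columns of `A`. -/
def coherence {m n : ℕ} (A : Matrix (Fin m) (Fin n) ℝ) : ℝ :=
  sSup {r : ℝ | ∃ i j : Fin n, i ≠ j ∧
    r = |∑ t, A t i * A t j| /
      (Real.sqrt (∑ t, A t i ^ 2) * Real.sqrt (∑ t, A t j ^ 2))}

/-- `A` satisfies the restricted isometry property of order `s` with constant `δ`. -/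
def RIP {m n : ℕ} (A : Matrix (Fin m) (Fin n) ℝ) (s : ℕ) (δ : ℝ) : Prop :=
  ∀ v : Fin n → ℝ, (Function.support v).ncard ≤ s →
    (1 - δ) * (∑ j, v j ^ 2) ≤ (∑ i, (A.mulVec v) i ^ 2) ∧
    (∑ i, (A.mulVec v) i ^ 2) ≤ (1 + δ) * (∑ j, v j ^ 2)

section Aux

lemma colNorm_pos {m n : ℕ} (A : Matrix (Fin m) (Fin n) ℝ)
    (hA : ∀ j : Fin n, (fun i => A i j) ≠ 0) (j : Fin n) :
    0 < Real.sqrt (∑ t, A t j ^ 2) := by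
  apply Real.sqrt_pos.2
  have hne : ∃ t, A t j ≠ 0 := by
    by_contra hc
    push_neg at hc
    exact hA j (funext fun t => hc t)
  obtain ⟨t, ht⟩ := hne
  exact Finset.sum_pos' (fun t _ => sq_nonneg _) ⟨t, Finset.mem_univ t, by positivity⟩

lemma abs_inner_le {m n : ℕ} (A : Matrix (Fin m) (Fin n) ℝ) (i j : Fin n) :
    |∑ t, A t i * A t j| ≤
      Real.sqrt (∑ t, A t i ^ 2) * Real.sqrt (∑ t, A t j ^ 2) := by
  have h := Finset.sum_mul_sq_le_sq_mul_sq Finset.univ (fun t => A t i) (fun t => A t j)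
  have := Real.sqrt_le_sqrt h
  rw [Real.sqrt_sq_eq_abs] at this
  calc |∑ t, A t i * A t j| ≤ Real.sqrt ((∑ t, A t i ^ 2) * ∑ t, A t j ^ 2) := this
    _ = _ := Real.sqrt_mul (by positivity) _

lemma coherence_ratio_le {m n : ℕ} (A : Matrix (Fin m) (Fin n) ℝ)
    (hA : ∀ j : Fin n, (fun i => A i j) ≠ 0) {i j : Fin n} (hij : i ≠ j) :
    |∑ t, A t i * A t j| ≤
      coherence A * (Real.sqrt (∑ t, A t i ^ 2) * Real.sqrt (∑ t, A t j ^ 2)) := by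
  have hNi := colNorm_pos A hA i
  have hNj := colNorm_pos A hA j
  have hbdd : BddAbove {r : ℝ | ∃ i j : Fin n, i ≠ j ∧
      r = |∑ t, A t i * A t j| /
        (Real.sqrt (∑ t, A t i ^ 2) * Real.sqrt (∑ t, A t j ^ 2))} := by
    refine ⟨1, fun r hr => ?_⟩
    obtain ⟨a, b, hab, rfl⟩ := hr
    have hNa := colNorm_pos A hA a
    have hNb := colNorm_pos A hA b
    rw [div_le_one (by positivity)]
    exact abs_inner_le A a b
  have hmem : |∑ t, A t i * A t j| /
      (Real.sqrt (∑ t, A t i ^ 2) * Real.sqrt (∑ t, A t j ^ 2)) ≤ coherence A :=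
    le_csSup hbdd ⟨i, j, hij, rfl⟩
  calc |∑ t, A t i * A t j|
      = |∑ t, A t i * A t j| /
        (Real.sqrt (∑ t, A t i ^ 2) * Real.sqrt (∑ t, A t j ^ 2)) *
        (Real.sqrt (∑ t, A t i ^ 2) * Real.sqrt (∑ t, A t j ^ 2)) := by
        field_simp
    _ ≤ _ := by
        apply mul_le_mul_of_nonneg_right hmem (by positivity)

/-- Coherence lower bound on supports of kernel vectors. -/
lemma kernel_support_bound {m n : ℕ} (A : Matrix (Fin m) (Fin n) ℝ)
    (hA : ∀ j : Fin n, (fun i => A i j) ≠ 0) (hμ : 0 < coherence A)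
    (v : Fin n → ℝ) (hv : A.mulVec v = 0) (hvne : v ≠ 0) :
    1 + 1 / coherence A ≤ ((Function.support v).ncard : ℝ) := by
  classical
  set μ := coherence A with hμdef
  set N : Fin n → ℝ := fun j => Real.sqrt (∑ t, A t j ^ 2) with hN
  have hNpos : ∀ j, 0 < N j := colNorm_pos A hA
  set T : Finset (Fin n) := (Function.support v).toFinite.toFinset with hT
  have hmemT : ∀ j, j ∈ T ↔ v j ≠ 0 := by
    intro j; simp [hT, Function.mem_support]
  -- Gram equations
  have hGram : ∀ i : Fin n, ∑ j, (∑ t, A t i * A t j) * v j = 0 := by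
    intro i
    have : ∑ j, (∑ t, A t i * A t j) * v j = ∑ t, A t i * (∑ j, A t j * v j) := by
      simp only [Finset.sum_mul, Finset.mul_sum]
      rw [Finset.sum_comm]
      exact Finset.sum_congr rfl fun t _ => Finset.sum_congr rfl fun j _ => by ring
    rw [this]
    have : ∀ t, (∑ j, A t j * v j) = 0 := fun t => congrFun hv t
    simp [this]
  -- pick i maximizing |v i| * N i over T
  set w : Fin n → ℝ := fun j => |v j| * N j with hw
  have hTne : T.Nonempty := by
    obtain ⟨j, hj⟩ := Function.ne_iff.1 hvne
    exact ⟨j, (hmemT j).2 hj⟩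
  obtain ⟨i, hiT, hmax⟩ := T.exists_max_image w hTne
  have hvi : v i ≠ 0 := (hmemT i).1 hiT
  have hwi : 0 < w i := by
    have := hNpos i
    simp only [hw]
    positivity
  -- restrict Gram equation to T
  have hsum : ∑ j ∈ T, (∑ t, A t i * A t j) * v j = 0 := by
    rw [← hGram i]
    apply Finset.sum_subset (Finset.subset_univ T)
    intro j _ hj
    have : v j = 0 := by
      by_contra hc; exact hj ((hmemT j).2 hc)
    simp [this]
  have hii : (∑ t, A t i * A t i) = N i ^ 2 := by
    rw [hN]
    rw [Real.sq_sqrt (by positivity)]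
    simp [sq]
  have hsplit : N i ^ 2 * v i = -∑ j ∈ T.erase i, (∑ t, A t i * A t j) * v j := by
    have h0 : (∑ t, A t i * A t i) * v i
        + ∑ j ∈ T.erase i, (∑ t, A t i * A t j) * v j
        = ∑ j ∈ T, (∑ t, A t i * A t j) * v j :=
      Finset.add_sum_erase T (fun j => (∑ t, A t i * A t j) * v j) hiT
    rw [hsum, hii] at h0
    linarith
  have hstep : N i ^ 2 * |v i| ≤ μ * N i * ∑ j ∈ T.erase i, w j := by
    calc N i ^ 2 * |v i| = |N i ^ 2 * v i| := by
          rw [abs_mul, abs_of_nonneg (sq_nonneg (N i))]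
      _ = |∑ j ∈ T.erase i, (∑ t, A t i * A t j) * v j| := by rw [hsplit, abs_neg]
      _ ≤ ∑ j ∈ T.erase i, |(∑ t, A t i * A t j) * v j| := Finset.abs_sum_le_sum_abs _ _
      _ ≤ ∑ j ∈ T.erase i, μ * N i * w j := by
          apply Finset.sum_le_sum
          intro j hj
          have hij : i ≠ j := (Finset.ne_of_mem_erase hj).symm
          rw [abs_mul]
          calc |∑ t, A t i * A t j| * |v j| ≤ μ * (N i * N j) * |v j| :=
                mul_le_mul_of_nonneg_right (coherence_ratio_le A hA hij) (abs_nonneg _)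
            _ = μ * N i * w j := by simp [hw]; ring
      _ = μ * N i * ∑ j ∈ T.erase i, w j := by rw [Finset.mul_sum]
  have hcard : ∑ j ∈ T.erase i, w j ≤ ((T.card : ℝ) - 1) * w i := by
    have h1 : ∑ j ∈ T.erase i, w j ≤ (T.erase i).card • w i := by
      apply Finset.sum_le_card_nsmul
      intro j hj
      exact hmax j (Finset.mem_of_mem_erase hj)
    rw [Finset.card_erase_of_mem hiT] at h1
    have h2 : ((T.card - 1 : ℕ) : ℝ) = (T.card : ℝ) - 1 := by
      have : 1 ≤ T.card := Finset.card_pos.2 hTne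
      push_cast [Nat.cast_sub this]
      ring
    calc ∑ j ∈ T.erase i, w j ≤ ((T.card - 1 : ℕ) : ℝ) * w i := by
          rw [← nsmul_eq_mul]; exact h1
      _ = ((T.card : ℝ) - 1) * w i := by rw [h2]
  -- combine: N i ^2 * |v i| ≤ μ * N i * (card - 1) * N i * |v i|
  have hNi := hNpos i
  have hkey : 1 ≤ μ * ((T.card : ℝ) - 1) := by
    have h3 : N i ^ 2 * |v i| ≤ μ * N i * (((T.card : ℝ) - 1) * w i) :=
      le_trans hstep (mul_le_mul_of_nonneg_left hcard (by positivity))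
    have h4 : N i ^ 2 * |v i| ≤ μ * ((T.card : ℝ) - 1) * (N i ^ 2 * |v i|) := by
      calc N i ^ 2 * |v i| ≤ μ * N i * (((T.card : ℝ) - 1) * w i) := h3
        _ = μ * ((T.card : ℝ) - 1) * (N i ^ 2 * |v i|) := by simp [hw]; ring
    have hpos : 0 < N i ^ 2 * |v i| := by
      have : 0 < |v i| := abs_pos.2 hvi
      positivity
    nlinarith
  have hncard : ((Function.support v).ncard : ℝ) = (T.card : ℝ) := by
    rw [Set.ncard_eq_toFinset_card _ (Function.support v).toFinite]
  have hcard1 : (1:ℝ) ≤ (T.card : ℝ) := by exact_mod_cast Finset.card_pos.2 hTne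
  have h5 : 1 / μ ≤ (T.card : ℝ) - 1 := by
    rw [div_le_iff₀ hμ]; nlinarith
  rw [hncard]; linarith

lemma ncard_support_blockSum {n γ : ℕ} (hγ : 1 ≤ γ) (x : Fin (n * γ) → ℝ) :
    (Function.support (blockSum x)).ncard ≤ (Function.support x).ncard := by
  classical
  have hchoice : ∀ j ∈ Function.support (blockSum (γ := γ) x),
      ∃ i : Fin γ, x (finProdFinEquiv (j, i)) ≠ 0 := by
    intro j hj
    by_contra hc
    push_neg at hc
    apply hj
    simp only [blockSum]
    exact Finset.sum_eq_zero fun i _ => hc i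
  choose f hf using hchoice
  set F : Fin n → Fin (n * γ) := fun j =>
    if h : j ∈ Function.support (blockSum (γ := γ) x)
      then finProdFinEquiv (j, f j h) else finProdFinEquiv (j, ⟨0, hγ⟩) with hF
  apply Set.ncard_le_ncard_of_injOn F
  · intro j hj
    simp only [hF, dif_pos hj]
    exact hf j hj
  · intro a ha b hb hab
    have h1 : (finProdFinEquiv.symm (F a)).1 = a := by
      simp only [hF, dif_pos ha, Equiv.symm_apply_apply]
    have h2 : (finProdFinEquiv.symm (F b)).1 = b := by
      simp only [hF, dif_pos hb, Equiv.symm_apply_apply]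
    rw [← h1, ← h2, hab]

lemma kron_apply {m n γ : ℕ} (hγ : 1 ≤ γ) (A : Matrix (Fin m) (Fin n) ℝ)
    (i : Fin m) (j : Fin n) (t : Fin γ) :
    kronEpsT A γ i (finProdFinEquiv (j, t)) = A i j * (Real.sqrt (γ : ℝ))⁻¹ := by
  simp only [kronEpsT, Matrix.of_apply]
  congr 1
  apply congrArg
  apply Fin.ext
  have hval : ((finProdFinEquiv (j, t) : Fin (n * γ)) : ℕ) = (t : ℕ) + γ * (j : ℕ) := rfl
  simp only [hval]
  rw [Nat.add_mul_div_left _ _ hγ, Nat.div_eq_of_lt t.isLt, Nat.zero_add]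

lemma mulVec_kronEpsT {m n γ : ℕ} (hγ : 1 ≤ γ) (A : Matrix (Fin m) (Fin n) ℝ)
    (z : Fin (n * γ) → ℝ) :
    (kronEpsT A γ).mulVec z
      = fun i => (Real.sqrt (γ : ℝ))⁻¹ * A.mulVec (blockSum z) i := by
  funext i
  show ∑ k, kronEpsT A γ i k * z k = _
  rw [← Equiv.sum_comp finProdFinEquiv (fun k => kronEpsT A γ i k * z k),
    Fintype.sum_prod_type]
  simp only [kron_apply hγ A i, Matrix.mulVec, dotProduct, blockSum,
    Finset.mul_sum]
  apply Finset.sum_congr rfl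
  intro j _
  apply Finset.sum_congr rfl
  intro t _
  ring

end Aux

/-- If `k < (1/2)(1 + 1/μ(A))`, the DK-STP measurement `(A ⊗ ε_γᵀ) x`
determines the block-sum vector `x^γ` of any `k`-sparse `x`. -/
theorem coherence_measurement_determines_blockSum {m n γ k : ℕ} (hγ : 1 ≤ γ)
    (A : Matrix (Fin m) (Fin n) ℝ) (hA : ∀ j : Fin n, (fun i => A i j) ≠ 0)
    (hμ : 0 < coherence A)
    (hk : (k : ℝ) < (1 / 2) * (1 + 1 / coherence A))
    (x x' : Fin (n * γ) → ℝ)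
    (hx : (Function.support x).ncard ≤ k) (hx' : (Function.support x').ncard ≤ k)
    (h : (kronEpsT A γ).mulVec x = (kronEpsT A γ).mulVec x') :
    blockSum x = blockSum x' := by
  classical
  have hγ0 : (0:ℝ) < (γ : ℝ) := by exact_mod_cast hγ
  have hs : (0:ℝ) < Real.sqrt (γ : ℝ) := Real.sqrt_pos.2 hγ0
  rw [mulVec_kronEpsT hγ A x, mulVec_kronEpsT hγ A x'] at h
  have key : A.mulVec (blockSum x) = A.mulVec (blockSum x') := by
    funext i
    have h1 := congrFun h i
    exact mul_left_cancel₀ (inv_ne_zero hs.ne') h1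
  by_contra hne
  set v : Fin n → ℝ := blockSum x - blockSum x' with hv
  have hvne : v ≠ 0 := sub_ne_zero.2 hne
  have hker : A.mulVec v = 0 := by
    rw [hv, Matrix.mulVec_sub, key, sub_self]
  have hsupp : Function.support v ⊆
      Function.support (blockSum x) ∪ Function.support (blockSum x') :=
    Function.support_sub _ _
  have hcard : ((Function.support v).ncard : ℝ) ≤ 2 * (k : ℝ) := by
    have h1 : (Function.support v).ncard ≤
        (Function.support (blockSum x) ∪ Function.support (blockSum x')).ncard :=
      Set.ncard_le_ncard hsupp (Set.toFinite _)
    have h2 := Set.ncard_union_le (Function.support (blockSum x))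
      (Function.support (blockSum x'))
    have h3 := ncard_support_blockSum hγ x
    have h4 := ncard_support_blockSum hγ x'
    have : (Function.support v).ncard ≤ 2 * k := by omega
    exact_mod_cast this
  have hbound := kernel_support_bound A hA hμ v hker hvne
  linarith
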